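/- Let P ⊆ ℝ^d be a full-dimensional lattice polytope and let Pyr(P) = conv((P × {1}) ∪ {0}) ⊆ ℝ^{d+1} be the lattice pyramid over P. Then μ^F(Pyr(P)) = max{2, μ^F(P) + 1}. -/

import Mathlib

open Set

noncomputable section

/-- The pairing `⟨a, x⟩ = ∑ i, a i * x i` of an integer linear functional with a point. -/
def pair {d : ℕ} (a : Fin d → ℤ) (x : Fin d → ℝ) : ℝ := ∑ i, (a i : ℝ) * x i

/-- The support function `h_P(a) = min_{x ∈ P} ⟨a, x⟩`. -/
def suppFn {d : ℕ} (P : Set (Fin d → ℝ)) (a : Fin d → ℤ) : ℝ := sInf (pair a '' P)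

/-- The Fine adjoint polytope `P^{F(s)}`. -/
def fineAdjoint {d : ℕ} (P : Set (Fin d → ℝ)) (s : ℝ) : Set (Fin d → ℝ) :=
  {x | ∀ a : Fin d → ℤ, a ≠ 0 → suppFn P a + s ≤ pair a x}

/-- The Fine number `n^F(P) = sup {s > 0 : P^{F(s)} ≠ ∅}`. -/
def fineNumber {d : ℕ} (P : Set (Fin d → ℝ)) : ℝ :=
  sSup {s : ℝ | 0 < s ∧ (fineAdjoint P s).Nonempty}

/-- The Fine ℚ-codegree `μ^F(P) = (n^F(P))⁻¹`. -/
def fineCodeg {d : ℕ} (P : Set (Fin d → ℝ)) : ℝ := (fineNumber P)⁻¹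

/-- The Fine core `core^F(P) = P^{F(n^F(P))}`. -/
def fineCore {d : ℕ} (P : Set (Fin d → ℝ)) : Set (Fin d → ℝ) := fineAdjoint P (fineNumber P)

/-- A rational polytope: the convex hull of finitely many rational points. -/
def IsRationalPolytope {d : ℕ} (P : Set (Fin d → ℝ)) : Prop :=
  ∃ V : Finset (Fin d → ℝ), V.Nonempty ∧ (∀ v ∈ V, ∀ i, ∃ q : ℚ, v i = (q : ℝ)) ∧
    P = convexHull ℝ (V : Set (Fin d → ℝ))

/-- A lattice polytope: the convex hull of finitely many integer points. -/
def IsLatticePolytope {d : ℕ} (P : Set (Fin d → ℝ)) : Prop :=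
  ∃ V : Finset (Fin d → ℝ), V.Nonempty ∧ (∀ v ∈ V, ∀ i, ∃ n : ℤ, v i = (n : ℝ)) ∧
    P = convexHull ℝ (V : Set (Fin d → ℝ))

/-- Full-dimensional: the affine hull is all of `ℝ^d`. -/
def IsFullDim {d : ℕ} (P : Set (Fin d → ℝ)) : Prop := affineSpan ℝ P = ⊤

/-- A nonzero integer functional `a` is a Fine core normal of `P` if
`⟨a, y⟩ = h_P(a) + n^F(P)` for every `y` in the Fine core of `P`. -/
def IsFineCoreNormal {d : ℕ} (P : Set (Fin d → ℝ)) (a : Fin d → ℤ) : Prop :=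
  a ≠ 0 ∧ ∀ y ∈ fineCore P, pair a y = suppFn P a + fineNumber P

/-- The set of integer points of `ℝ^k`. -/
def intPts (k : ℕ) : Set (Fin k → ℝ) := {x | ∀ i, ∃ n : ℤ, x i = (n : ℝ)}

/-- The Fine spectrum in dimension `k`. -/
def fineSpec (k : ℕ) : Set ℝ :=
  {r | ∃ P : Set (Fin k → ℝ), IsLatticePolytope P ∧ IsFullDim P ∧ r = fineCodeg P}

/-- Unimodular equivalence of subsets of `ℝ^k`. -/
def UnimodEquiv {k : ℕ} (P Q : Set (Fin k → ℝ)) : Prop :=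
  ∃ U : Matrix (Fin k) (Fin k) ℤ, IsUnit U.det ∧ ∃ v : Fin k → ℤ,
    P = (fun x => fun i => (∑ j, (U i j : ℝ) * x j) + (v i : ℝ)) '' Q

/-- The standard simplex `Δ_k = conv{0, e_1, ..., e_k}`. -/
def stdSimp (k : ℕ) : Set (Fin k → ℝ) :=
  convexHull ℝ (insert (0 : Fin k → ℝ) (Set.range fun i => Pi.single i (1 : ℝ)))

/-- The lattice pyramid `Pyr(Q) = conv((Q × {1}) ∪ {0})`. -/
def pyrSet {k : ℕ} (Q : Set (Fin k → ℝ)) : Set (Fin (k + 1) → ℝ) :=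
  convexHull ℝ (((fun x => Fin.snoc x (1 : ℝ)) '' Q) ∪ {0})

/-- Twice the standard triangle, `2Δ₂ = conv{(0,0),(2,0),(0,2)}`. -/
def twoDelta2 : Set (Fin 2 → ℝ) :=
  convexHull ℝ ({![0, 0], ![2, 0], ![0, 2]} : Set (Fin 2 → ℝ))

/-- The `m`-fold iterated lattice pyramid over `2Δ₂`. -/
def iterPyr : (m : ℕ) → Set (Fin (2 + m) → ℝ)
  | 0 => twoDelta2
  | m + 1 => pyrSet (iterPyr m)

end

noncomputable section Aux

open Finset

lemma pair_add {d : ℕ} (a : Fin d → ℤ) (x y : Fin d → ℝ) :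
    pair a (x + y) = pair a x + pair a y := by
  simp [pair, mul_add, Finset.sum_add_distrib]

lemma pair_smul' {d : ℕ} (a : Fin d → ℤ) (c : ℝ) (x : Fin d → ℝ) :
    pair a (c • x) = c * pair a x := by
  simp [pair, Finset.mul_sum, mul_left_comm]

lemma pair_zero {d : ℕ} (x : Fin d → ℝ) : pair (0 : Fin d → ℤ) x = 0 := by
  simp [pair]

lemma pair_neg {d : ℕ} (a : Fin d → ℤ) (x : Fin d → ℝ) : pair (-a) x = -pair a x := by
  simp [pair]

/-- `pair a` as a linear map. -/
def pairLM {d : ℕ} (a : Fin d → ℤ) : (Fin d → ℝ) →ₗ[ℝ] ℝ where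
  toFun := pair a
  map_add' := pair_add a
  map_smul' := fun c x => pair_smul' a c x

@[simp] lemma pairLM_apply {d : ℕ} (a : Fin d → ℤ) (x : Fin d → ℝ) :
    pairLM a x = pair a x := rfl

lemma suppFn_eq_inf' {d : ℕ} {V : Finset (Fin d → ℝ)} (hne : V.Nonempty) (a : Fin d → ℤ) :
    suppFn (convexHull ℝ (V : Set (Fin d → ℝ))) a = V.inf' hne (pair a) := by
  have hlb : ∀ x ∈ convexHull ℝ (V : Set (Fin d → ℝ)), V.inf' hne (pair a) ≤ pair a x := by
    intro x hx
    have hconv : Convex ℝ ((pairLM a) ⁻¹' (Set.Ici (V.inf' hne (pair a)))) :=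
      (convex_Ici (V.inf' hne (pair a))).linear_preimage (pairLM a)
    have hsub : (V : Set (Fin d → ℝ)) ⊆ (pairLM a) ⁻¹' (Set.Ici (V.inf' hne (pair a))) := by
      intro v hv
      simp only [Set.mem_preimage, Set.mem_Ici, pairLM_apply]
      exact Finset.inf'_le _ hv
    exact convexHull_min hsub hconv hx
  have hbdd : BddBelow (pair a '' convexHull ℝ (V : Set (Fin d → ℝ))) :=
    ⟨_, fun y ⟨x, hx, hxy⟩ => hxy ▸ hlb x hx⟩
  apply le_antisymm
  · obtain ⟨v, hv, hveq⟩ := V.exists_mem_eq_inf' hne (pair a)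
    rw [hveq]
    exact csInf_le hbdd ⟨v, subset_convexHull ℝ _ hv, rfl⟩
  · obtain ⟨v, hv⟩ := hne
    exact le_csInf ⟨pair a v, v, subset_convexHull ℝ _ hv, rfl⟩
      (fun y ⟨x, hx, hxy⟩ => hxy ▸ hlb x hx)

lemma suppFn_le_of_mem {d : ℕ} {V : Finset (Fin d → ℝ)} (hne : V.Nonempty) (a : Fin d → ℤ)
    {x : Fin d → ℝ} (hx : x ∈ convexHull ℝ (V : Set (Fin d → ℝ))) :
    suppFn (convexHull ℝ (V : Set (Fin d → ℝ))) a ≤ pair a x := by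
  rw [suppFn_eq_inf' hne a]
  have hconv : Convex ℝ ((pairLM a) ⁻¹' (Set.Ici (V.inf' hne (pair a)))) :=
    (convex_Ici (V.inf' hne (pair a))).linear_preimage (pairLM a)
  have hsub : (V : Set (Fin d → ℝ)) ⊆ (pairLM a) ⁻¹' (Set.Ici (V.inf' hne (pair a))) := by
    intro v hv
    simp only [Set.mem_preimage, Set.mem_Ici, pairLM_apply]
    exact Finset.inf'_le _ hv
  exact convexHull_min hsub hconv hx

lemma suppFn_int {d : ℕ} {P : Set (Fin d → ℝ)} (hP : IsLatticePolytope P) (a : Fin d → ℤ) :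
    ∃ m : ℤ, suppFn P a = (m : ℝ) := by
  obtain ⟨V, hne, hint, rfl⟩ := hP
  rw [suppFn_eq_inf' hne a]
  obtain ⟨v, hv, hveq⟩ := V.exists_mem_eq_inf' hne (pair a)
  have hvz : ∀ i, v i = ((fun i => (hint v hv i).choose) i : ℝ) :=
    fun i => (hint v hv i).choose_spec
  refine ⟨∑ i, a i * (hint v hv i).choose, ?_⟩
  rw [hveq]
  have h1 : pair a v = ∑ i, (a i : ℝ) * (((hint v hv i).choose : ℤ) : ℝ) := by
    unfold pair
    exact Finset.sum_congr rfl fun i _ => congrArg (fun t => (a i : ℝ) * t) (hvz i)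
  rw [h1]
  push_cast
  ring

lemma suppFn_zero {d : ℕ} {V : Finset (Fin d → ℝ)} (hne : V.Nonempty) :
    suppFn (convexHull ℝ (V : Set (Fin d → ℝ))) (0 : Fin d → ℤ) = 0 := by
  rw [suppFn_eq_inf' hne]
  rw [show pair (0 : Fin d → ℤ) = fun _ => (0:ℝ) from funext pair_zero]
  simp

/-- `x ↦ Fin.snoc x 1` with explicit type. -/
def snocOne {d : ℕ} (x : Fin d → ℝ) : Fin (d + 1) → ℝ := Fin.snoc x 1

/-- `x ↦ Fin.snoc x 0` as a linear map. -/
def snocLM (d : ℕ) : (Fin d → ℝ) →ₗ[ℝ] (Fin (d + 1) → ℝ) where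
  toFun x := Fin.snoc x 0
  map_add' x y := by
    funext i
    induction i using Fin.lastCases <;> simp
  map_smul' c x := by
    funext i
    induction i using Fin.lastCases <;> simp

/-- `x ↦ Fin.snoc x 1` as an affine map. -/
def snocAM (d : ℕ) : (Fin d → ℝ) →ᵃ[ℝ] (Fin (d + 1) → ℝ) where
  toFun x := snocOne x
  linear := snocLM d
  map_vadd' p v := by
    show (Fin.snoc (v + p) 1 : Fin (d+1) → ℝ) = Fin.snoc v 0 + Fin.snoc p 1
    funext i
    induction i using Fin.lastCases <;> simp [snocOne]

lemma pair_snoc {d : ℕ} (a' : Fin (d + 1) → ℤ) (x : Fin d → ℝ) (c : ℝ) :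
    pair a' (Fin.snoc x c) =
      pair (fun i => a' i.castSucc) x + (a' (Fin.last d) : ℝ) * c := by
  simp [pair, Fin.sum_univ_castSucc]

lemma pair_split {d : ℕ} (a' : Fin (d + 1) → ℤ) (y : Fin (d + 1) → ℝ) :
    pair a' y = pair (fun i => a' i.castSucc) (Fin.init y)
      + (a' (Fin.last d) : ℝ) * y (Fin.last d) := by
  conv_lhs => rw [← Fin.snoc_init_self y]
  rw [pair_snoc]

lemma eq_zero_of_parts {d : ℕ} {a' : Fin (d + 1) → ℤ}
    (h1 : (fun i => a' i.castSucc) = (0 : Fin d → ℤ)) (h2 : a' (Fin.last d) = 0) :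
    a' = 0 := by
  funext i
  refine Fin.lastCases ?_ (fun j => ?_) i
  · exact h2
  · exact congrFun h1 j

lemma pyr_hull_eq {d : ℕ} (V : Finset (Fin d → ℝ)) :
    pyrSet (convexHull ℝ (V : Set (Fin d → ℝ))) =
      convexHull ℝ (((snocOne (d := d)) '' (V : Set (Fin d → ℝ))) ∪ {0}) := by
  show convexHull ℝ ((snocOne (d := d)) '' convexHull ℝ (V : Set (Fin d → ℝ)) ∪ {0}) = _
  have him : (snocOne (d := d)) '' convexHull ℝ (V : Set (Fin d → ℝ))
      = convexHull ℝ ((snocOne (d := d)) '' (V : Set (Fin d → ℝ))) := by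
    exact (snocAM d).image_convexHull (V : Set (Fin d → ℝ))
  rw [him, convexHull_convexHull_union_left]

lemma suppFn_pyr {d : ℕ} {V : Finset (Fin d → ℝ)} (hne : V.Nonempty)
    (a' : Fin (d + 1) → ℤ) :
    suppFn (pyrSet (convexHull ℝ (V : Set (Fin d → ℝ)))) a' =
      min (suppFn (convexHull ℝ (V : Set (Fin d → ℝ))) (fun i => a' i.castSucc)
        + (a' (Fin.last d) : ℝ)) 0 := by
  classical
  rw [pyr_hull_eq]
  have hset : ((snocOne (d := d)) '' (V : Set (Fin d → ℝ))) ∪ {0}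
      = ((V.image (snocOne (d := d)) ∪ {0} : Finset (Fin (d+1) → ℝ)) :
          Set (Fin (d + 1) → ℝ)) := by
    simp
  rw [hset]
  have hne1 : (V.image (snocOne (d := d))).Nonempty := Finset.Nonempty.image hne (snocOne (d := d))
  have hne2 : ({0} : Finset (Fin (d+1) → ℝ)).Nonempty := ⟨0, Finset.mem_singleton_self 0⟩
  have hneU : (V.image (snocOne (d := d)) ∪ {0} : Finset (Fin (d+1) → ℝ)).Nonempty :=
    hne1.mono Finset.subset_union_left
  rw [suppFn_eq_inf' hneU a']
  have : (V.image (snocOne (d := d)) ∪ {0}).inf'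
      (hne1.mono Finset.subset_union_left) (pair a')
      = (V.image (snocOne (d := d))).inf' hne1 (pair a') ⊓
        ({0} : Finset (Fin (d+1) → ℝ)).inf' hne2 (pair a') :=
    Finset.inf'_union hne1 hne2 (pair a')
  rw [show (V.image (snocOne (d := d)) ∪ {0}).inf' hneU (pair a')
    = (V.image (snocOne (d := d))).inf' hne1 (pair a') ⊓
        ({0} : Finset (Fin (d+1) → ℝ)).inf' hne2 (pair a') from this]
  have h0 : ({0} : Finset (Fin (d+1) → ℝ)).inf' hne2 (pair a') = 0 := by
    simp [pair]
  have h1 : (V.image (snocOne (d := d))).inf' hne1 (pair a')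
      = V.inf' hne (fun v => pair (fun i => a' i.castSucc) v + (a' (Fin.last d) : ℝ)) := by
    rw [Finset.inf'_image]
    apply Finset.inf'_congr _ rfl
    intro v _
    show pair a' (Fin.snoc v 1) = _
    exact pair_snoc a' v 1 |>.trans (by ring)
  have h2 : V.inf' hne (fun v => pair (fun i => a' i.castSucc) v + (a' (Fin.last d) : ℝ))
      = V.inf' hne (pair (fun i => a' i.castSucc)) + (a' (Fin.last d) : ℝ) := by
    apply le_antisymm
    · obtain ⟨v, hv, hveq⟩ := V.exists_mem_eq_inf' hne (pair (fun i => a' i.castSucc))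
      calc V.inf' hne (fun v => pair (fun i => a' i.castSucc) v + (a' (Fin.last d) : ℝ))
          ≤ pair (fun i => a' i.castSucc) v + (a' (Fin.last d) : ℝ) := Finset.inf'_le _ hv
        _ = _ := by rw [hveq]
    · apply Finset.le_inf'
      intro v hv
      exact add_le_add (Finset.inf'_le _ hv) le_rfl
  rw [h0, h1, h2, ← suppFn_eq_inf' hne]

lemma bddAbove_fineSet {d : ℕ} (hd : 1 ≤ d) (P : Set (Fin d → ℝ)) :
    BddAbove {s : ℝ | 0 < s ∧ (fineAdjoint P s).Nonempty} := by
  set i0 : Fin d := ⟨0, hd⟩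
  set a0 : Fin d → ℤ := Pi.single i0 1 with ha0def
  have ha0 : a0 ≠ 0 := by
    intro h
    have := congrFun h i0
    simp [ha0def, Pi.single_eq_same] at this
  refine ⟨-(suppFn P a0 + suppFn P (-a0)) / 2, ?_⟩
  rintro s ⟨hs, x, hx⟩
  have h1 := hx a0 ha0
  have h2 := hx (-a0) (neg_ne_zero.mpr ha0)
  rw [pair_neg] at h2
  linarith

lemma exists_pos_mem_fineSet {d : ℕ} {P : Set (Fin d → ℝ)}
    (hP : IsLatticePolytope P) (hfull : IsFullDim P) :
    ∃ s, 0 < s ∧ (fineAdjoint P s).Nonempty := by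
  obtain ⟨V, hne, hint, hPeq⟩ := hP
  have hconv : Convex ℝ P := hPeq ▸ convex_convexHull ℝ _
  have hint_ne : (interior P).Nonempty :=
    (Convex.interior_nonempty_iff_affineSpan_eq_top hconv).mpr hfull
  obtain ⟨x, hx⟩ := hint_ne
  obtain ⟨ε, hε, hball⟩ := Metric.mem_nhds_iff.mp (mem_interior_iff_mem_nhds.mp hx)
  refine ⟨ε / 2, by positivity, x, ?_⟩
  intro a ha
  set u : Fin d → ℝ := fun i => if 0 < a i then -(ε/2) else if a i < 0 then ε/2 else 0 with hu
  have hui : ∀ i, |u i| ≤ ε / 2 := by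
    intro i
    show |(if 0 < a i then -(ε/2) else if a i < 0 then ε/2 else 0)| ≤ ε/2
    split_ifs
    · rw [abs_neg, abs_of_pos (by positivity : (0:ℝ) < ε/2)]
    · rw [abs_of_pos (by positivity : (0:ℝ) < ε/2)]
    · simpa using (by positivity : (0:ℝ) ≤ ε/2)
  have hmem : x + u ∈ P := by
    apply hball
    rw [Metric.mem_ball]
    have hd2 : dist (x + u) x ≤ ε / 2 := by
      rw [dist_pi_le_iff (by positivity)]
      intro i
      simp only [Pi.add_apply, Real.dist_eq, add_sub_cancel_left]
      exact hui i
    linarith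
  have hterm : ∀ i, (a i : ℝ) * u i = -(ε/2) * |(a i : ℝ)| := by
    intro i
    rcases lt_trichotomy (a i) 0 with h | h | h
    · have h' : (a i : ℝ) < 0 := by exact_mod_cast h
      rw [hu]
      simp only [if_neg (not_lt.mpr h.le), if_pos h]
      rw [abs_of_neg h']; ring
    · simp [hu, h]
    · have h' : (0:ℝ) < (a i : ℝ) := by exact_mod_cast h
      rw [hu]
      simp only [if_pos h]
      rw [abs_of_pos h']; ring
  have hsum : pair a u = -(ε/2) * ∑ i, |(a i : ℝ)| := by
    unfold pair
    rw [Finset.mul_sum]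
    exact Finset.sum_congr rfl fun i _ => hterm i
  obtain ⟨i0, hi0⟩ := Function.ne_iff.mp ha
  have habs : (1:ℝ) ≤ ∑ i, |(a i : ℝ)| := by
    have h1 : (1:ℝ) ≤ |(a i0 : ℝ)| := by
      have h2 : 1 ≤ |a i0| := Int.one_le_abs (by simpa using hi0)
      calc (1:ℝ) = ((1:ℤ):ℝ) := by norm_num
        _ ≤ ((|a i0| : ℤ) : ℝ) := by exact_mod_cast h2
        _ = |(a i0 : ℝ)| := by push_cast; ring
    calc (1:ℝ) ≤ |(a i0:ℝ)| := h1
      _ ≤ ∑ i, |(a i:ℝ)| := Finset.single_le_sum (f := fun i => |(a i : ℝ)|) (fun i _ => abs_nonneg _) (Finset.mem_univ i0)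
  have hle : suppFn P a ≤ pair a (x + u) := by
    rw [hPeq] at hmem ⊢
    exact suppFn_le_of_mem hne a hmem
  rw [_root_.pair_add, hsum] at hle
  nlinarith [hle, habs, hε]

end Aux


/-- the Fine ℚ-codegree of a lattice pyramid. -/
theorem stmt_9 {d : ℕ} (hd : 1 ≤ d) (P : Set (Fin d → ℝ)) (hP : IsLatticePolytope P)
    (hfull : IsFullDim P) :
    fineCodeg (pyrSet P) = max 2 (fineCodeg P + 1) := by
  classical
  obtain ⟨V, hne, hint, hPeq⟩ := hP
  have hbddP : BddAbove {s : ℝ | 0 < s ∧ (fineAdjoint P s).Nonempty} := bddAbove_fineSet hd P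
  obtain ⟨s0, hs0pos, hs0⟩ := exists_pos_mem_fineSet ⟨V, hne, hint, hPeq⟩ hfull
  have hSPne : {s : ℝ | 0 < s ∧ (fineAdjoint P s).Nonempty}.Nonempty := ⟨s0, hs0pos, hs0⟩
  have htpos : 0 < fineNumber P :=
    lt_of_lt_of_le hs0pos (le_csSup hbddP (Set.mem_setOf.mpr ⟨hs0pos, hs0⟩))
  set t := fineNumber P with ht
  set m := min (1/2 : ℝ) (t / (t + 1)) with hm
  have hmpos : 0 < m := lt_min (by norm_num) (div_pos htpos (by linarith))
  have hm_half : m ≤ 1/2 := min_le_left _ _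
  have hsupp_pyr : ∀ a' : Fin (d+1) → ℤ, suppFn (pyrSet P) a' =
      min (suppFn P (fun i => a' i.castSucc) + (a' (Fin.last d) : ℝ)) 0 := by
    intro a'
    rw [hPeq]
    exact suppFn_pyr hne a'
  have hsupp0 : suppFn P (0 : Fin d → ℤ) = 0 := by rw [hPeq]; exact suppFn_zero hne
  -- Lower bound: every `0 < s < m` admits a nonempty Fine adjoint of the pyramid
  have hlower : ∀ s : ℝ, 0 < s → s < m → (fineAdjoint (pyrSet P) s).Nonempty := by
    intro s hs hsm
    have hs_half : s < 1/2 := lt_of_lt_of_le hsm hm_half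
    have h1s : 0 < 1 - s := by linarith
    have hr_lt : s / (1 - s) < t := by
      rw [div_lt_iff₀ h1s]
      have hlt : s < t / (t+1) := lt_of_lt_of_le hsm (min_le_right _ _)
      rw [lt_div_iff₀ (by linarith : (0:ℝ) < t + 1)] at hlt
      nlinarith
    obtain ⟨r', hr'mem, hr'gt⟩ := exists_lt_of_lt_csSup hSPne (ht ▸ hr_lt)
    obtain ⟨hr'pos, z, hz⟩ := hr'mem
    have hz_r : ∀ a : Fin d → ℤ, a ≠ 0 → suppFn P a + s / (1 - s) ≤ pair a z := by
      intro a ha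
      have h := hz a ha
      linarith
    refine ⟨Fin.snoc ((1 - s) • z) (1 - s), ?_⟩
    intro a' ha'
    rw [hsupp_pyr a', pair_snoc, pair_smul']
    by_cases hA : (fun i => a' i.castSucc) = (0 : Fin d → ℤ)
    · have hb : a' (Fin.last d) ≠ 0 := fun hb => ha' (eq_zero_of_parts hA hb)
      rw [hA, hsupp0, pair_zero, zero_add]
      rcases hb.lt_or_gt with h | h
      · have hb1 : ((a' (Fin.last d)) : ℝ) ≤ -1 := by
          have : a' (Fin.last d) ≤ -1 := by omega
          exact_mod_cast this
        rw [min_eq_left (by linarith : ((a' (Fin.last d)) : ℝ) ≤ 0)]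
        nlinarith
      · have hb1 : (1:ℝ) ≤ ((a' (Fin.last d)) : ℝ) := by
          have : 1 ≤ a' (Fin.last d) := by omega
          exact_mod_cast this
        rw [min_eq_right (by linarith : (0:ℝ) ≤ ((a' (Fin.last d)) : ℝ))]
        nlinarith
    · have hq := hz_r _ hA
      have hq' : (1-s) * pair (fun i => a' i.castSucc) z
          ≥ (1-s) * suppFn P (fun i => a' i.castSucc) + s := by
        have hid : (1-s) * (s / (1-s)) = s := by field_simp
        nlinarith
      rcases le_or_gt 0 (suppFn P (fun i => a' i.castSucc) + ((a' (Fin.last d)) : ℝ)) with h | h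
      · rw [min_eq_right h]
        nlinarith
      · rw [min_eq_left h.le]
        nlinarith
  -- Upper bound
  have hupper : ∀ s ∈ {s : ℝ | 0 < s ∧ (fineAdjoint (pyrSet P) s).Nonempty}, s ≤ m := by
    rintro s ⟨hs, y, hy⟩
    set c := y (Fin.last d) with hc
    have h1 : s ≤ c := by
      set ep : Fin (d+1) → ℤ := Fin.snoc (0 : Fin d → ℤ) 1 with hep
      have hep0 : ep ≠ 0 := by
        intro h
        have := congrFun h (Fin.last d)
        simp [hep] at this
      have h1 := hy ep hep0
      rw [hsupp_pyr, pair_split] at h1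
      have heplow : (fun i => ep i.castSucc) = (0 : Fin d → ℤ) := by
        funext i; simp [hep]
      have hepl : ep (Fin.last d) = 1 := by simp [hep]
      rw [heplow, hsupp0, pair_zero, hepl] at h1
      norm_num at h1
      rw [← hc] at h1
      linarith
    have h2 : c ≤ 1 - s := by
      set em : Fin (d+1) → ℤ := Fin.snoc (0 : Fin d → ℤ) (-1) with hem
      have hem0 : em ≠ 0 := by
        intro h
        have := congrFun h (Fin.last d)
        simp [hem] at this
      have h2 := hy em hem0
      rw [hsupp_pyr, pair_split] at h2
      have hemlow : (fun i => em i.castSucc) = (0 : Fin d → ℤ) := by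
        funext i; simp [hem]
      have heml : em (Fin.last d) = -1 := by simp [hem]
      rw [hemlow, hsupp0, pair_zero, heml] at h2
      norm_num at h2
      rw [← hc] at h2
      linarith
    have hcpos : 0 < c := lt_of_lt_of_le hs h1
    have hs_half : s ≤ 1/2 := by linarith
    have h1s : 0 < 1 - s := by linarith
    refine le_min (by linarith) ?_
    -- show s ≤ t / (t+1)
    have hrmem : s / (1 - s) ∈ {s : ℝ | 0 < s ∧ (fineAdjoint P s).Nonempty} := by
      refine ⟨div_pos hs h1s, c⁻¹ • (Fin.init y), ?_⟩
      intro a ha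
      obtain ⟨mz, hmz⟩ := suppFn_int ⟨V, hne, hint, hPeq⟩ a
      set a' : Fin (d+1) → ℤ := Fin.snoc a (-mz) with ha'def
      have ha' : a' ≠ 0 := by
        obtain ⟨i0, hi0⟩ := Function.ne_iff.mp ha
        intro h
        have := congrFun h (Fin.castSucc i0)
        simp [ha'def] at this
        exact hi0 this
      have h3 := hy a' ha'
      rw [hsupp_pyr, pair_split] at h3
      have hlow : (fun i => a' i.castSucc) = a := by funext i; simp [ha'def]
      have hlast : a' (Fin.last d) = -mz := by simp [ha'def]
      rw [hlow, hmz, hlast] at h3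
      push_cast at h3
      rw [show (mz:ℝ) + -(mz:ℝ) = 0 by ring, min_self, zero_add, ← hc] at h3
      -- h3 : s ≤ pair a (Fin.init y) + (-mz) * c
      rw [pair_smul', hmz]
      have hdiv : s / (1-s) ≤ s / c := by
        rw [div_le_div_iff₀ h1s hcpos]
        nlinarith
      have hkey : (mz:ℝ) + s / c ≤ c⁻¹ * pair a (Fin.init y) := by
        have hmul := mul_le_mul_of_nonneg_left
          (show (mz:ℝ) * c + s ≤ pair a (Fin.init y) by linarith)
          (inv_nonneg.mpr hcpos.le)
        have hid : c⁻¹ * ((mz:ℝ) * c + s) = (mz:ℝ) + s / c := by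
          field_simp
        linarith [hid ▸ hmul]
      linarith [hdiv, hkey]
    have hrle : s / (1 - s) ≤ t := le_csSup hbddP hrmem
    rw [div_le_iff₀ h1s] at hrle
    rw [le_div_iff₀ (by linarith : (0:ℝ) < t + 1)]
    nlinarith
  -- The Fine number of the pyramid equals m
  have hfn : fineNumber (pyrSet P) = m := by
    apply le_antisymm
    · exact Real.sSup_le hupper hmpos.le
    · by_contra hcon
      push_neg at hcon
      have hmax_lt : max (fineNumber (pyrSet P)) 0 < m := max_lt hcon hmpos
      set w := (max (fineNumber (pyrSet P)) 0 + m) / 2 with hw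
      have hwpos : 0 < w := by
        have := le_max_right (fineNumber (pyrSet P)) 0
        rw [hw]; linarith
      have hwm : w < m := by rw [hw]; linarith
      have hwmem : w ∈ {s : ℝ | 0 < s ∧ (fineAdjoint (pyrSet P) s).Nonempty} :=
        ⟨hwpos, hlower w hwpos hwm⟩
      have hle : w ≤ fineNumber (pyrSet P) := le_csSup ⟨m, hupper⟩ hwmem
      have := le_max_left (fineNumber (pyrSet P)) 0
      rw [hw] at hle
      linarith
  -- Final computation
  show (fineNumber (pyrSet P))⁻¹ = max 2 ((fineNumber P)⁻¹ + 1)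
  rw [hfn, ← ht]
  have htne : t ≠ 0 := ne_of_gt htpos
  have hinvt : t⁻¹ * t = 1 := inv_mul_cancel₀ htne
  have hinvpos : 0 < t⁻¹ := inv_pos.mpr htpos
  rcases le_total (1/2 : ℝ) (t/(t+1)) with h | h
  · rw [hm, min_eq_left h]
    have h1 : 1 ≤ t := by
      rw [div_le_div_iff₀ (by norm_num) (by linarith)] at h
      linarith
    have h2 : t⁻¹ + 1 ≤ 2 := by nlinarith
    rw [max_eq_left h2]
    norm_num
  · rw [hm, min_eq_right h]
    have h1 : t ≤ 1 := by
      rw [div_le_div_iff₀ (by linarith) (by norm_num)] at h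
      linarith
    have h2 : (2:ℝ) ≤ t⁻¹ + 1 := by nlinarith
    rw [max_eq_right h2]
    rw [show (t/(t+1))⁻¹ = (t+1)/t by rw [inv_div]]
    field_simp
    ring
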